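/- Suppose E[‖x' − x*‖²] ≤ (1 − 2αc)‖x − x*‖² + α²M² with 0 < 2αc < 1, α²M² < 2αcε, and ‖x − x*‖² > ε. Then, for the concave nondecreasing function plog and constant β = ε/(2αcε − α²M²), one has β·E[plog(‖x' − x*‖²/ε)] + 1 ≤ β·plog(‖x − x*‖²/ε). Equivalently, W_t(x_t,…) = β·plog(‖x_t − x*‖²/ε) + t is a rate supermartingale for the sequential SGD process outside the success region. -/

import Mathlib

open MeasureTheory

/-- The piecewise logarithm. -/
noncomputable def plog (x : ℝ) : ℝ := if 1 ≤ x then Real.log (Real.exp 1 * x) else x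

lemma plog_of_ge {x : ℝ} (hx : 1 ≤ x) : plog x = 1 + Real.log x := by
  rw [plog, if_pos hx, Real.log_mul (Real.exp_ne_zero 1) (by linarith), Real.log_exp]

lemma plog_of_lt {x : ℝ} (hx : x < 1) : plog x = x := by
  rw [plog, if_neg (not_le.mpr hx)]

lemma one_sub_inv_le_log {x : ℝ} (hx : 0 < x) : 1 - 1 / x ≤ Real.log x := by
  have h := Real.log_le_sub_one_of_pos (x := 1 / x) (by positivity)
  rw [Real.log_div one_ne_zero hx.ne', Real.log_one] at h
  linarith

lemma plog_le_self (y : ℝ) : plog y ≤ y := by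
  by_cases hy : 1 ≤ y
  · rw [plog_of_ge hy]
    have := Real.log_le_sub_one_of_pos (show (0:ℝ) < y by linarith)
    linarith
  · rw [plog_of_lt (not_le.mp hy)]

/-- Tangent-line (supporting line) bound for the concave function `plog`. -/
lemma plog_tangent {s : ℝ} (hs : 0 < s) (y : ℝ) :
    plog y ≤ plog s + (if 1 ≤ s then 1 / s else 1) * (y - s) := by
  by_cases hs1 : 1 ≤ s
  · rw [if_pos hs1, plog_of_ge hs1]
    have hss : s * (1 / s) = 1 := mul_one_div_cancel hs.ne'
    by_cases hy1 : 1 ≤ y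
    · rw [plog_of_ge hy1]
      have hy0 : 0 < y := by linarith
      have h := Real.log_le_sub_one_of_pos (x := y / s) (by positivity)
      rw [Real.log_div hy0.ne' hs.ne'] at h
      have hd : y / s = y * (1 / s) := by ring
      rw [hd] at h
      nlinarith
    · rw [plog_of_lt (not_le.mp hy1)]
      have hls := one_sub_inv_le_log hs
      have h1 : 0 ≤ 1 - 1 / s := by
        have : 1 / s ≤ 1 := by rw [div_le_one hs]; exact hs1
        linarith
      have hy := not_le.mp hy1
      nlinarith [mul_le_mul_of_nonneg_right hy.le h1]
  · rw [if_neg hs1, plog_of_lt (not_le.mp hs1), one_mul]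
    have := plog_le_self y
    linarith

theorem stmt_13 (d : ℕ) {Ω : Type*} [MeasurableSpace Ω] (μ : Measure Ω)
    [IsProbabilityMeasure μ]
    (x' : Ω → EuclideanSpace ℝ (Fin d)) (x xstar : EuclideanSpace ℝ (Fin d))
    (α c M ε : ℝ) (hε : 0 < ε)
    (hαc0 : 0 < 2 * α * c) (hαc1 : 2 * α * c < 1)
    (hstep : α ^ 2 * M ^ 2 < 2 * α * c * ε)
    (hout : ε < ‖x - xstar‖ ^ 2)
    (hint2 : Integrable (fun ω => ‖x' ω - xstar‖ ^ 2) μ)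
    (hintplog : Integrable (fun ω => plog (‖x' ω - xstar‖ ^ 2 / ε)) μ)
    (hcontr : ∫ ω, ‖x' ω - xstar‖ ^ 2 ∂μ
        ≤ (1 - 2 * α * c) * ‖x - xstar‖ ^ 2 + α ^ 2 * M ^ 2) :
    (ε / (2 * α * c * ε - α ^ 2 * M ^ 2)) * ∫ ω, plog (‖x' ω - xstar‖ ^ 2 / ε) ∂μ + 1
      ≤ (ε / (2 * α * c * ε - α ^ 2 * M ^ 2)) * plog (‖x - xstar‖ ^ 2 / ε) := by
  set A : ℝ := ‖x - xstar‖ ^ 2 with hA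
  have hA0 : 0 < A := lt_trans hε hout
  have hm0 : (0:ℝ) ≤ α ^ 2 * M ^ 2 := by positivity
  set D : ℝ := 2 * α * c * ε - α ^ 2 * M ^ 2 with hD
  have hD0 : 0 < D := by simp only [hD]; linarith
  set s : ℝ := ((1 - 2 * α * c) * A + α ^ 2 * M ^ 2) / ε with hs
  have hs0 : 0 < s := by
    apply div_pos _ hε
    nlinarith
  have hsε : (1 - 2 * α * c) * A + α ^ 2 * M ^ 2 = s * ε := by
    rw [hs, div_mul_cancel₀ _ hε.ne']
  set g : ℝ := if 1 ≤ s then 1 / s else 1 with hg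
  have hg0 : 0 ≤ g := by
    rw [hg]; split <;> [positivity; norm_num]
  -- Step 1: Jensen-type bound via the tangent line of plog at s
  have hIle : (∫ ω, plog (‖x' ω - xstar‖ ^ 2 / ε) ∂μ) ≤ plog s := by
    have hmono : (∫ ω, plog (‖x' ω - xstar‖ ^ 2 / ε) ∂μ)
        ≤ ∫ ω, ((plog s - g * s) + (g / ε) * ‖x' ω - xstar‖ ^ 2) ∂μ := by
      refine integral_mono hintplog ((integrable_const _).add (hint2.const_mul _)) fun ω => ?_
      have h := plog_tangent hs0 (‖x' ω - xstar‖ ^ 2 / ε)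
      have heq : plog s + g * (‖x' ω - xstar‖ ^ 2 / ε - s)
          = (plog s - g * s) + (g / ε) * ‖x' ω - xstar‖ ^ 2 := by
        field_simp
        ring
      exact h.trans_eq heq
    have hcalc : (∫ ω, ((plog s - g * s) + (g / ε) * ‖x' ω - xstar‖ ^ 2) ∂μ)
        = (plog s - g * s) + (g / ε) * ∫ ω, ‖x' ω - xstar‖ ^ 2 ∂μ := by
      rw [integral_add (integrable_const _) (hint2.const_mul _), integral_const_mul,
        integral_const]
      simp
    have hbd : (g / ε) * (∫ ω, ‖x' ω - xstar‖ ^ 2 ∂μ) ≤ (g / ε) * (s * ε) :=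
      mul_le_mul_of_nonneg_left (hcontr.trans_eq hsε) (by positivity)
    have hge : (g / ε) * (s * ε) = g * s := by
      field_simp
    linarith [hmono.trans_eq hcalc]
  -- Step 2: plog (A/ε) - plog s ≥ D/ε
  have hr1 : 1 < A / ε := (one_lt_div hε).mpr hout
  have hkey : D / ε ≤ plog (A / ε) - plog s := by
    by_cases hs1 : 1 ≤ s
    · rw [plog_of_ge hr1.le, plog_of_ge hs1]
      have hrs : 0 < A / ε / s := by positivity
      have hlog := one_sub_inv_le_log hrs
      rw [Real.log_div (by positivity) hs0.ne'] at hlog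
      have hsub : 1 / (A / ε / s) = ((1 - 2 * α * c) * A + α ^ 2 * M ^ 2) / A := by
        rw [hs]; field_simp
      rw [hsub] at hlog
      have hfrac : ((1 - 2 * α * c) * A + α ^ 2 * M ^ 2) / A
          ≤ (1 - 2 * α * c) + α ^ 2 * M ^ 2 / ε := by
        rw [add_div, mul_div_assoc, div_self hA0.ne', mul_one, add_le_add_iff_left]
        exact div_le_div_of_nonneg_left hm0 hε hout.le
      have hDe : D / ε = 2 * α * c - α ^ 2 * M ^ 2 / ε := by
        rw [hD, sub_div, mul_div_cancel_right₀ _ hε.ne']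
      linarith
    · rw [plog_of_ge hr1.le, plog_of_lt (not_le.mp hs1)]
      have hlog := one_sub_inv_le_log (show (0:ℝ) < A / ε by positivity)
      have hinv : 1 / (A / ε) = ε / A := one_div_div A ε
      rw [hinv] at hlog
      have hsmall : (1 - 2 * α * c) * A < ε := by
        have := (div_lt_one hε).mp (not_le.mp hs1)
        linarith
      have hDe : D / ε = 2 * α * c - α ^ 2 * M ^ 2 / ε := by
        rw [hD, sub_div, mul_div_cancel_right₀ _ hε.ne']
      have hse : s = (1 - 2 * α * c) * (A / ε) + α ^ 2 * M ^ 2 / ε := by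
        rw [hs, add_div, mul_div_assoc]
      rw [hDe, hse]
      have hkr : (1 - 2 * α * c) ≤ ε / A := by
        rw [le_div_iff₀ hA0]
        nlinarith
      have h1 : (1 - 2 * α * c) * (A / ε - 1) ≤ (ε / A) * (A / ε - 1) :=
        mul_le_mul_of_nonneg_right hkr (by linarith)
      have hprod : (ε / A) * (A / ε) = 1 := by
        field_simp
      nlinarith [h1, hprod, hlog]
  -- conclude
  have hβ : 0 < ε / D := div_pos hε hD0
  have hone : (ε / D) * (D / ε) = 1 := by
    field_simp
  have hmul := mul_le_mul_of_nonneg_left hkey hβ.le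
  rw [mul_sub] at hmul
  calc (ε / D) * (∫ ω, plog (‖x' ω - xstar‖ ^ 2 / ε) ∂μ) + 1
      ≤ (ε / D) * plog s + (ε / D) * (D / ε) := by
        rw [hone]
        exact add_le_add_left (mul_le_mul_of_nonneg_left hIle hβ.le) 1
    _ ≤ (ε / D) * plog (A / ε) := by linarith
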